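/- Let β₀, β₁ ∈ (0,1) with β₀ + β₁ > 1. For every finite binary string σ, the event {ω : σ ∈ Prune(ω)} has positive P_{β₀,β₁}-measure, and P_{β₀,β₁}(σ0 ∈ Prune(ω) and σ1 ∈ Prune(ω) | σ ∈ Prune(ω)) = β₀ + β₁ − 1; that is, the conditional probability that a node of the pruned infinite Galton–Watson tree has two children is β₀ + β₁ − 1. -/

import Mathlib

open MeasureTheory

/-- The Galton–Watson tree of `ω`: all binary strings all of whose nonempty prefixes survive. -/
def gwTree (ω : {σ : List Bool // σ ≠ []} → Bool) : Set (List Bool) :=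
  {σ | ∀ τ : {σ : List Bool // σ ≠ []}, τ.val <+: σ → ω τ = true}

/-- The pruned tree: nodes of the Galton–Watson tree above which the tree is infinite
(has infinitely many extensions in the tree). -/
def gwPrune (ω : {σ : List Bool // σ ≠ []} → Bool) : Set (List Bool) :=
  {σ | σ ∈ gwTree ω ∧ {τ | σ <+: τ ∧ τ ∈ gwTree ω}.Infinite}

/-- Probability that coordinate `σ` takes value `b`: it is `1` (survives) with probability
`β₀` if the last bit of `σ` is `0`, and `β₁` if the last bit of `σ` is `1`. -/
def gwP (β₀ β₁ : ℝ) (σ : {σ : List Bool // σ ≠ []}) (b : Bool) : ℝ :=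
  if b then (if σ.val.getLast σ.prop = false then β₀ else β₁)
  else 1 - (if σ.val.getLast σ.prop = false then β₀ else β₁)

/-- `P` is the product measure `P_{β₀,β₁}`: a probability measure with independent coordinates,
coordinate `σ` equal to `1` with probability `β₀` or `β₁` according to the last bit of `σ`,
as expressed by its finite-dimensional distributions. -/
def IsGWMeasure (β₀ β₁ : ℝ) (P : Measure ({σ : List Bool // σ ≠ []} → Bool)) : Prop :=
  IsProbabilityMeasure P ∧
    ∀ (S : Finset {σ : List Bool // σ ≠ []}) (f : {σ : List Bool // σ ≠ []} → Bool),
      P {ω | ∀ σ ∈ S, ω σ = f σ} = ENNReal.ofReal (∏ σ ∈ S, gwP β₀ β₁ σ (f σ))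

abbrev Coord := {σ : List Bool // σ ≠ []}

noncomputable section
open Classical

def cylE (S : Finset Coord) (f : Coord → Bool) : Set (Coord → Bool) := {ω | ∀ σ ∈ S, ω σ = f σ}

lemma measurableSet_cylE (S : Finset Coord) (f : Coord → Bool) : MeasurableSet (cylE S f) := by
  have : cylE S f = ⋂ σ ∈ S, (fun ω : Coord → Bool => ω σ) ⁻¹' {f σ} := by
    ext ω; simp [cylE]
  rw [this]
  exact MeasurableSet.biInter S.countable_toSet fun σ _ =>
    (measurable_pi_apply σ) (measurableSet_singleton _)

def DetBy (s : Set Coord) (A : Set (Coord → Bool)) : Prop :=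
  ∀ ω ω' : Coord → Bool, (∀ σ ∈ s, ω σ = ω' σ) → ω ∈ A → ω' ∈ A

lemma DetBy.mono {s t : Set Coord} {A} (h : DetBy s A) (hst : s ⊆ t) : DetBy t A :=
  fun ω ω' hag => h ω ω' (fun σ hσ => hag σ (hst hσ))

lemma DetBy.compl {s A} (h : DetBy s A) : DetBy s Aᶜ := by
  intro ω ω' hag hω hω'
  exact hω (h ω' ω (fun σ hσ => (hag σ hσ).symm) hω')

lemma DetBy.inter {s A B} (hA : DetBy s A) (hB : DetBy s B) : DetBy s (A ∩ B) :=
  fun ω ω' hag hω => ⟨hA ω ω' hag hω.1, hB ω ω' hag hω.2⟩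

lemma DetBy.union {s A B} (hA : DetBy s A) (hB : DetBy s B) : DetBy s (A ∪ B) :=
  fun ω ω' hag hω => hω.elim (fun h => Or.inl (hA ω ω' hag h)) (fun h => Or.inr (hB ω ω' hag h))

def extf (S : Finset Coord) (g : {x // x ∈ S} → Bool) : Coord → Bool :=
  fun σ => if h : σ ∈ S then g ⟨σ, h⟩ else false

def GA (S : Finset Coord) (A : Set (Coord → Bool)) : Finset ({x // x ∈ S} → Bool) :=
  Finset.univ.filter (fun g => extf S g ∈ A)

lemma det_eq_biUnion {S : Finset Coord} {A} (hA : DetBy ↑S A) :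
    A = ⋃ g ∈ GA S A, cylE S (extf S g) := by
  ext ω
  constructor
  · intro hω
    refine Set.mem_iUnion₂.2 ⟨fun x : {x // x ∈ S} => ω x.val, ?_, ?_⟩
    · simp only [GA, Finset.mem_coe, Finset.mem_filter, Finset.mem_univ, true_and]
      exact hA ω _ (fun σ hσ => by
        have hσ' : σ ∈ S := hσ
        simp [extf, dif_pos hσ']) hω
    · intro σ hσ; simp [extf, dif_pos hσ]
  · intro hω
    obtain ⟨g, hg, hωg⟩ := Set.mem_iUnion₂.1 hω
    simp only [GA, Finset.mem_filter, Finset.mem_univ, true_and] at hg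
    exact hA _ ω (fun σ hσ => (hωg σ hσ).symm) hg

lemma pairwise_cylE (S : Finset Coord) :
    (↑(Finset.univ : Finset ({x // x ∈ S} → Bool)) : Set ({x // x ∈ S} → Bool)).PairwiseDisjoint
      (fun g => cylE S (extf S g)) := by
  intro g _ g' _ hne
  refine Set.disjoint_left.2 fun ω hω hω' => hne ?_
  funext x
  have h1 := hω x.val x.prop
  have h2 := hω' x.val x.prop
  simp only [extf, dif_pos x.prop] at h1 h2
  rw [← h1, ← h2]

lemma DetBy.measurableSet {S : Finset Coord} {A} (hA : DetBy ↑S A) : MeasurableSet A := by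
  rw [det_eq_biUnion hA]
  exact MeasurableSet.biUnion (GA S A).countable_toSet fun g _ => measurableSet_cylE _ _

variable {β₀ β₁ : ℝ} {P : Measure (Coord → Bool)}

def gwP' (β₀ β₁ : ℝ) (σ : Coord) (b : Bool) : ℝ :=
  if b then (if σ.val.getLast σ.prop = false then β₀ else β₁)
  else 1 - (if σ.val.getLast σ.prop = false then β₀ else β₁)

lemma gwP'_nonneg (h0 : β₀ ∈ Set.Ioo (0:ℝ) 1) (h1 : β₁ ∈ Set.Ioo (0:ℝ) 1) (σ : Coord) (b : Bool) :
    0 ≤ gwP' β₀ β₁ σ b := by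
  obtain ⟨a0, b0⟩ := h0; obtain ⟨a1, b1⟩ := h1
  cases b <;> simp only [gwP', if_true, if_false, Bool.false_eq_true, sub_nonneg] <;>
    split <;> linarith

def IsGW (β₀ β₁ : ℝ) (P : Measure (Coord → Bool)) : Prop :=
  IsProbabilityMeasure P ∧
    ∀ (S : Finset Coord) (f : Coord → Bool),
      P (cylE S f) = ENNReal.ofReal (∏ σ ∈ S, gwP' β₀ β₁ σ (f σ))

lemma meas_det (hP : IsGW β₀ β₁ P) {S : Finset Coord} {A} (hA : DetBy ↑S A) :
    P A = ∑ g ∈ GA S A, ENNReal.ofReal (∏ σ ∈ S, gwP' β₀ β₁ σ (extf S g σ)) := by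
  conv_lhs => rw [det_eq_biUnion hA]
  rw [measure_biUnion_finset
    (((pairwise_cylE S).subset (by simp)))
    (fun g _ => measurableSet_cylE _ _)]
  exact Finset.sum_congr rfl fun g _ => hP.2 S (extf S g)

lemma cylE_inter_cylE {S T : Finset Coord} (hST : Disjoint S T) (f g : Coord → Bool) :
    cylE S f ∩ cylE T g = cylE (S ∪ T) (fun σ => if σ ∈ S then f σ else g σ) := by
  ext ω
  simp only [cylE, Set.mem_inter_iff, Set.mem_setOf_eq, Finset.mem_union]
  constructor
  · rintro ⟨h1, h2⟩ σ hσ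
    rcases hσ with hσ | hσ
    · rw [if_pos hσ]; exact h1 σ hσ
    · rw [if_neg (fun hS => Finset.disjoint_left.1 hST hS hσ)]; exact h2 σ hσ
  · intro h
    constructor
    · intro σ hσ; have := h σ (Or.inl hσ); rwa [if_pos hσ] at this
    · intro σ hσ; have := h σ (Or.inr hσ)
      rwa [if_neg (fun hS => Finset.disjoint_left.1 hST hS hσ)] at this

lemma meas_cylE_inter (hP : IsGW β₀ β₁ P) (h0 : β₀ ∈ Set.Ioo (0:ℝ) 1) (h1 : β₁ ∈ Set.Ioo (0:ℝ) 1)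
    {S T : Finset Coord} (hST : Disjoint S T) (f : Coord → Bool) {B} (hB : DetBy ↑T B) :
    P (cylE S f ∩ B) = P (cylE S f) * P B := by
  have hdist : cylE S f ∩ B = ⋃ g ∈ GA T B, (cylE S f ∩ cylE T (extf T g)) := by
    conv_lhs => rw [det_eq_biUnion hB]
    ext ω; simp only [Set.mem_iUnion₂, Set.mem_inter_iff, Set.mem_iUnion]; tauto
  rw [hdist, measure_biUnion_finset
      (((pairwise_cylE T).subset (by simp)).mono_on
        (fun g _ => Set.inter_subset_right.trans (subset_refl _)))
      (fun g _ => ((measurableSet_cylE _ _).inter (measurableSet_cylE _ _)))]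
  · rw [meas_det hP hB, hP.2 S f, Finset.mul_sum]
    refine Finset.sum_congr rfl fun g _ => ?_
    rw [cylE_inter_cylE hST, hP.2 (S ∪ T), Finset.prod_union hST]
    rw [ENNReal.ofReal_mul (Finset.prod_nonneg fun σ _ => gwP'_nonneg h0 h1 σ _)]
    congr 1
    · congr 1; exact Finset.prod_congr rfl fun σ hσ => by rw [if_pos hσ]
    · congr 1; exact Finset.prod_congr rfl fun σ hσ => by
        rw [if_neg (fun hS => Finset.disjoint_left.1 hST hS hσ)]

lemma indep_det (hP : IsGW β₀ β₁ P) (h0 : β₀ ∈ Set.Ioo (0:ℝ) 1) (h1 : β₁ ∈ Set.Ioo (0:ℝ) 1)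
    {S T : Finset Coord} (hST : Disjoint S T) {A B} (hA : DetBy ↑S A) (hB : DetBy ↑T B) :
    P (A ∩ B) = P A * P B := by
  have hdist : A ∩ B = ⋃ g ∈ GA S A, (cylE S (extf S g) ∩ B) := by
    conv_lhs => rw [det_eq_biUnion hA]
    ext ω; simp only [Set.mem_iUnion₂, Set.mem_inter_iff, Set.mem_iUnion]; tauto
  rw [hdist, measure_biUnion_finset
      (((pairwise_cylE S).subset (by simp)).mono_on
        (fun g _ => Set.inter_subset_left.trans (subset_refl _)))
      (fun g _ => ((measurableSet_cylE _ _).inter hB.measurableSet))]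
  rw [meas_det hP hA, Finset.sum_mul]
  exact Finset.sum_congr rfl fun g _ => by rw [meas_cylE_inter hP h0 h1 hST _ hB, hP.2]

def listsLE : ℕ → Finset (List Bool)
  | 0 => {[]}
  | n+1 => {[]} ∪ ((listsLE n).image (List.cons false) ∪ (listsLE n).image (List.cons true))

lemma mem_listsLE {n : ℕ} {l : List Bool} : l ∈ listsLE n ↔ l.length ≤ n := by
  induction n generalizing l with
  | zero => simp [listsLE, List.length_eq_zero_iff]
  | succ n ih =>
    cases l with
    | nil => simp [listsLE]
    | cons b t =>
      simp only [listsLE, Finset.mem_union, Finset.mem_singleton, Finset.mem_image,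
        List.length_cons, Nat.succ_le_succ_iff]
      constructor
      · rintro (h | ⟨a, ha, h⟩ | ⟨a, ha, h⟩)
        · exact absurd h (by simp)
        · injection h with h1 h2; subst h2; exact ih.1 ha
        · injection h with h1 h2; subst h2; exact ih.1 ha
      · intro h
        cases b
        · exact Or.inr (Or.inl ⟨t, ih.2 h, rfl⟩)
        · exact Or.inr (Or.inr ⟨t, ih.2 h, rfl⟩)

def SLE (n : ℕ) : Finset Coord := (listsLE n).subtype (· ≠ [])

lemma mem_SLE {n : ℕ} {σ : Coord} : σ ∈ SLE n ↔ σ.val.length ≤ n := by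
  simp [SLE, mem_listsLE]

def shiftω (s : List Bool) (ω : Coord → Bool) : Coord → Bool :=
  fun τ => ω ⟨s ++ τ.val, by simp [τ.prop]⟩

lemma measurable_shiftω (s : List Bool) : Measurable (shiftω s) :=
  measurable_pi_lambda _ (fun τ => measurable_pi_apply _)

def appC (s : List Bool) (τ : Coord) : Coord := ⟨s ++ τ.val, by simp [τ.prop]⟩

lemma appC_injective (s : List Bool) : Function.Injective (appC s) := by
  intro τ τ' h
  simpa [appC, Subtype.ext_iff] using h

lemma getLast_appC (s : List Bool) (τ : Coord) :
    (appC s τ).val.getLast (appC s τ).prop = τ.val.getLast τ.prop := by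
  have h1 : (appC s τ).val.getLast? = some ((appC s τ).val.getLast (appC s τ).prop) :=
    (List.getLast?_eq_getLast _)
  have h2 : τ.val.getLast? = some (τ.val.getLast τ.prop) := (List.getLast?_eq_getLast _)
  have h3 : (appC s τ).val.getLast? = τ.val.getLast? := by
    show (s ++ τ.val).getLast? = _
    rw [List.getLast?_append, h2]; rfl
  rw [h3, h2] at h1
  exact (Option.some_inj.1 h1).symm

lemma gwP'_appC (s : List Bool) (τ : Coord) (b : Bool) :
    gwP' β₀ β₁ (appC s τ) b = gwP' β₀ β₁ τ b := by
  simp only [gwP', getLast_appC]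

lemma isGW_map_shiftω (hP : IsGW β₀ β₁ P) (s : List Bool) :
    IsGW β₀ β₁ (P.map (shiftω s)) := by
  haveI := hP.1
  constructor
  · exact Measure.isProbabilityMeasure_map (measurable_shiftω s).aemeasurable
  · intro S f
    rw [Measure.map_apply (measurable_shiftω s) (measurableSet_cylE S f)]
    have hpre : shiftω s ⁻¹' cylE S f
        = cylE (S.image (appC s)) (Function.extend (appC s) f (fun _ => false)) := by
      ext ω
      simp only [cylE, Set.mem_preimage, Set.mem_setOf_eq, Finset.mem_image]
      constructor
      · rintro h τ ⟨σ, hσ, rfl⟩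
        rw [(appC_injective s).extend_apply]
        exact h σ hσ
      · intro h σ hσ
        have := h (appC s σ) ⟨σ, hσ, rfl⟩
        rwa [(appC_injective s).extend_apply] at this
    rw [hpre, hP.2]
    congr 1
    rw [Finset.prod_image (fun σ _ σ' _ h => appC_injective s h)]
    refine Finset.prod_congr rfl fun σ _ => ?_
    rw [(appC_injective s).extend_apply, gwP'_appC]

def Dev (n : ℕ) : Set (Coord → Bool) := {ω | ∃ τ : List Bool, τ.length = n ∧ τ ∈ gwTree ω}

lemma detBy_Dev (n : ℕ) : DetBy ↑(SLE n) (Dev n) := by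
  rintro ω ω' hag ⟨τ, hlen, hτ⟩
  refine ⟨τ, hlen, fun ρ hρ => ?_⟩
  have hlenρ : ρ.val.length ≤ n := hlen ▸ hρ.length_le
  rw [← hag ρ (by simpa [mem_SLE] using hlenρ)]
  exact hτ ρ hρ

lemma Dev_zero : Dev 0 = Set.univ := by
  ext ω
  simp only [Dev, Set.mem_setOf_eq, Set.mem_univ, iff_true]
  exact ⟨[], rfl, fun ρ hρ => absurd (List.prefix_nil.mp hρ) ρ.prop⟩

lemma gwTree_mono {ω} {τ τ' : List Bool} (h : τ' <+: τ) (hτ : τ ∈ gwTree ω) : τ' ∈ gwTree ω :=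
  fun ρ hρ => hτ ρ (hρ.trans h)

lemma Dev_antitone : Antitone Dev := by
  refine antitone_nat_of_succ_le fun n => ?_
  rintro ω ⟨τ, hlen, hτ⟩
  exact ⟨τ.take n, by simp [hlen], gwTree_mono (List.take_prefix n τ) hτ⟩

def coordOf (b : Bool) : Coord := ⟨[b], by simp⟩

lemma singleton_mem_gwTree {ω} {b : Bool} : [b] ∈ gwTree ω ↔ ω (coordOf b) = true := by
  constructor
  · intro h; exact h (coordOf b) (List.prefix_refl _)
  · intro h π hπ
    have hlen : π.val.length = 1 :=
      le_antisymm (by simpa using hπ.length_le) (List.length_pos_iff.2 π.prop)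
    have : π = coordOf b := Subtype.ext (List.IsPrefix.eq_of_length hπ (by simp [hlen, coordOf]))
    rwa [this]

lemma mem_gwTree_append {ω} {s ρ : List Bool} (hs : s ∈ gwTree ω) :
    (s ++ ρ ∈ gwTree ω) ↔ ρ ∈ gwTree (shiftω s ω) := by
  constructor
  · intro h ρ' hρ'
    obtain ⟨t, ht⟩ := hρ'
    exact h ⟨s ++ ρ'.val, by simp [ρ'.prop]⟩ ⟨t, by rw [List.append_assoc, ht]⟩
  · intro h π hπ
    rcases le_or_gt π.val.length s.length with hle | hlt
    · exact hs π (List.prefix_of_prefix_length_le hπ (s.prefix_append ρ) hle)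
    · have hsπ : s <+: π.val := List.prefix_of_prefix_length_le (s.prefix_append ρ) hπ hlt.le
      obtain ⟨t, ht⟩ := hsπ
      have htρ : t <+: ρ := by
        have h2 : s ++ t <+: s ++ ρ := ht ▸ hπ
        exact (List.prefix_append_right_inj s).1 h2
      have htne : t ≠ [] := by
        rintro rfl
        rw [List.append_nil] at ht
        rw [← ht] at hlt
        exact lt_irrefl _ hlt
      have h3 := h ⟨t, htne⟩ htρ
      have : π = ⟨s ++ t, by simp [htne]⟩ := Subtype.ext ht.symm
      rw [this]
      exact h3

lemma cons_mem_gwTree {ω} {b : Bool} {ρ : List Bool} :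
    (b :: ρ ∈ gwTree ω) ↔ ω (coordOf b) = true ∧ ρ ∈ gwTree (shiftω [b] ω) := by
  constructor
  · intro h
    have hb : [b] ∈ gwTree ω := gwTree_mono ⟨ρ, rfl⟩ h
    exact ⟨singleton_mem_gwTree.1 hb, (mem_gwTree_append hb).1 h⟩
  · rintro ⟨hb, hρ⟩
    exact (mem_gwTree_append (singleton_mem_gwTree.2 hb)).2 hρ

def Bev (b : Bool) (n : ℕ) : Set (Coord → Bool) :=
  {ω | ω (coordOf b) = false} ∪ ({ω | ω (coordOf b) = true} ∩ shiftω [b] ⁻¹' (Dev n)ᶜ)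

lemma Dev_succ_compl (n : ℕ) : (Dev (n+1))ᶜ = Bev false n ∩ Bev true n := by
  ext ω
  simp only [Set.mem_compl_iff, Dev, Set.mem_setOf_eq, Set.mem_inter_iff]
  constructor
  · intro h
    have key : ∀ b : Bool, ω ∈ Bev b n := by
      intro b
      by_cases hb : ω (coordOf b) = true
      · refine Or.inr ⟨hb, fun hD => ?_⟩
        obtain ⟨ρ, hρlen, hρ⟩ := hD
        exact h ⟨b :: ρ, by simp [hρlen], cons_mem_gwTree.2 ⟨hb, hρ⟩⟩
      · exact Or.inl (by simpa using hb)
    exact ⟨key false, key true⟩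
  · rintro ⟨hf, ht⟩ ⟨τ, hlen, hτ⟩
    cases τ with
    | nil => simp at hlen
    | cons b ρ =>
      obtain ⟨hb, hρ⟩ := cons_mem_gwTree.1 hτ
      have hρlen : ρ.length = n := by simpa using hlen
      have hmem : ω ∈ Bev b n := by cases b; exacts [hf, ht]
      rcases hmem with h1 | ⟨_, h2⟩
      · rw [Set.mem_setOf_eq, hb] at h1; simp at h1
      · exact h2 ⟨ρ, hρlen, hρ⟩

def SHead (b : Bool) (n : ℕ) : Finset Coord :=
  (SLE n).filter (fun τ => τ.val.head? = some b)

lemma detBy_shiftω_pre {s : List Bool} {m : ℕ} {A} (hA : DetBy ↑(SLE m) A) :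
    DetBy {τ : Coord | ∃ ρ : Coord, τ = appC s ρ ∧ ρ.val.length ≤ m} (shiftω s ⁻¹' A) := by
  intro ω ω' hag hω
  exact hA _ _ (fun ρ hρ => hag (appC s ρ) ⟨ρ, rfl, mem_SLE.1 hρ⟩) hω

lemma detBy_coord (c : Coord) (v : Bool) : DetBy {c} {ω | ω c = v} := by
  intro ω ω' hag hω
  rw [Set.mem_setOf_eq, ← hag c rfl]; exact hω

lemma detBy_coord' (c : Coord) (v : Bool) : DetBy ↑({c} : Finset Coord) {ω | ω c = v} :=
  (detBy_coord c v).mono (by simp)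

lemma detBy_Bev (b : Bool) (n : ℕ) : DetBy ↑(SHead b (n+1)) (Bev b n) := by
  have hc : (coordOf b : Coord) ∈ SHead b (n+1) := by
    simp [SHead, mem_SLE, coordOf]
  refine DetBy.union ?_ (DetBy.inter ?_ ?_)
  · exact (detBy_coord _ _).mono (by simpa using Finset.mem_coe.2 hc)
  · exact (detBy_coord _ _).mono (by simpa using Finset.mem_coe.2 hc)
  · refine (detBy_shiftω_pre ((detBy_Dev n).compl)).mono ?_
    rintro τ ⟨ρ, rfl, hρ⟩
    simp only [Finset.coe_filter, SHead, Set.mem_setOf_eq, Finset.mem_coe, mem_SLE]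
    constructor
    · show ([b] ++ ρ.val).length ≤ n + 1
      simp [Nat.succ_le_succ hρ]
    · rfl

noncomputable def xseq (β₀ β₁ : ℝ) : ℕ → ℝ
  | 0 => 0
  | n+1 => (1 - β₀ + β₀ * xseq β₀ β₁ n) * (1 - β₁ + β₁ * xseq β₀ β₁ n)

section Analysis
variable (h0 : β₀ ∈ Set.Ioo (0:ℝ) 1) (h1 : β₁ ∈ Set.Ioo (0:ℝ) 1)
include h0 h1

lemma xseq_nonneg : ∀ n, 0 ≤ xseq β₀ β₁ n := by
  obtain ⟨a0, b0⟩ := h0; obtain ⟨a1, b1⟩ := h1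
  intro n
  induction n with
  | zero => simp [xseq]
  | succ n ih =>
    have f0 : 0 ≤ 1 - β₀ + β₀ * xseq β₀ β₁ n := by nlinarith
    have f1 : 0 ≤ 1 - β₁ + β₁ * xseq β₀ β₁ n := by nlinarith
    exact mul_nonneg f0 f1

end Analysis

lemma meas_coord (hP : IsGW β₀ β₁ P) (c : Coord) (v : Bool) :
    P {ω | ω c = v} = ENNReal.ofReal (gwP' β₀ β₁ c v) := by
  have : {ω : Coord → Bool | ω c = v} = cylE {c} (fun _ => v) := by
    ext ω; simp [cylE]
  rw [this, hP.2, Finset.prod_singleton]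

lemma gwP'_coordOf_true (b : Bool) : gwP' β₀ β₁ (coordOf b) true = if b then β₁ else β₀ := by
  cases b <;> simp [gwP', coordOf]

lemma gwP'_coordOf_false (b : Bool) :
    gwP' β₀ β₁ (coordOf b) false = 1 - (if b then β₁ else β₀) := by
  cases b <;> simp [gwP', coordOf]

lemma measure_Dev_compl (h0 : β₀ ∈ Set.Ioo (0:ℝ) 1) (h1 : β₁ ∈ Set.Ioo (0:ℝ) 1) :
    ∀ (n : ℕ) (P : Measure (Coord → Bool)), IsGW β₀ β₁ P →
      P (Dev n)ᶜ = ENNReal.ofReal (xseq β₀ β₁ n) := by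
  intro n
  induction n with
  | zero =>
    intro P hP
    rw [Dev_zero, Set.compl_univ]
    simp [xseq]
  | succ n ih =>
    intro P hP
    set βb : Bool → ℝ := fun b => if b then β₁ else β₀ with hβb
    have hβmem : ∀ b, βb b ∈ Set.Ioo (0:ℝ) 1 := by
      intro b; cases b
      · simpa [hβb] using h0
      · simpa [hβb] using h1
    have hBev : ∀ b, P (Bev b n) = ENNReal.ofReal (1 - βb b + βb b * xseq β₀ β₁ n) := by
      intro b
      have hdisj2 : Disjoint ({ω : Coord → Bool | ω (coordOf b) = false})
          ({ω | ω (coordOf b) = true} ∩ shiftω [b] ⁻¹' (Dev n)ᶜ) := by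
        refine Set.disjoint_left.2 fun ω hω hω' => ?_
        have := hω'.1
        rw [Set.mem_setOf_eq] at hω this
        rw [hω] at this; exact absurd this (by simp)
      have hSdisj : Disjoint ({coordOf b} : Finset Coord)
          ((SLE (n+1)).filter (fun τ => 2 ≤ τ.val.length)) := by
        refine Finset.disjoint_left.2 fun τ hτ hτ' => ?_
        rw [Finset.mem_singleton] at hτ
        rw [Finset.mem_filter] at hτ'
        rw [hτ] at hτ'
        simp [coordOf] at hτ'
      have hdet2 : DetBy ↑((SLE (n+1)).filter (fun τ => 2 ≤ τ.val.length))
          (shiftω [b] ⁻¹' (Dev n)ᶜ) := by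
        refine (detBy_shiftω_pre ((detBy_Dev n).compl)).mono ?_
        rintro τ ⟨ρ, rfl, hρ⟩
        simp only [Finset.coe_filter, Set.mem_setOf_eq, Finset.mem_coe, mem_SLE]
        have hlen : (appC [b] ρ).val.length = ρ.val.length + 1 := by
          show ([b] ++ ρ.val).length = _; simp [Nat.add_comm]
        constructor
        · omega
        · have : 1 ≤ ρ.val.length := List.length_pos_iff.2 ρ.prop
          omega
      have hinter : P ({ω | ω (coordOf b) = true} ∩ shiftω [b] ⁻¹' (Dev n)ᶜ)
          = ENNReal.ofReal (βb b) * ENNReal.ofReal (xseq β₀ β₁ n) := by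
        have hcyl : ({ω : Coord → Bool | ω (coordOf b) = true}) = cylE {coordOf b} (fun _ => true) := by
          ext ω; simp [cylE]
        rw [indep_det hP h0 h1 hSdisj
          ((detBy_coord (coordOf b) true).mono (by simp)) hdet2]
        rw [meas_coord hP, gwP'_coordOf_true]
        congr 1
        rw [← Measure.map_apply (measurable_shiftω [b]) ((detBy_Dev n).measurableSet.compl)]
        exact ih _ (isGW_map_shiftω hP [b])
      have msecond : MeasurableSet ({ω : Coord → Bool | ω (coordOf b) = true}
          ∩ shiftω [b] ⁻¹' (Dev n)ᶜ) := by
        refine MeasurableSet.inter ?_ ((measurable_shiftω [b]) ((detBy_Dev n).measurableSet.compl))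
        have : {ω : Coord → Bool | ω (coordOf b) = true}
            = (fun ω : Coord → Bool => ω (coordOf b)) ⁻¹' {true} := rfl
        rw [this]
        exact (measurable_pi_apply (coordOf b)) (measurableSet_singleton true)
      have hnn : 0 ≤ xseq β₀ β₁ n := xseq_nonneg h0 h1 n
      obtain ⟨hb0, hb1⟩ := hβmem b
      rw [Bev, measure_union hdisj2 msecond, meas_coord hP, gwP'_coordOf_false, hinter,
        ← ENNReal.ofReal_mul (le_of_lt hb0),
        ← ENNReal.ofReal_add (by linarith) (mul_nonneg (le_of_lt hb0) hnn)]
    have hSheadDisj : Disjoint (SHead false (n+1)) (SHead true (n+1)) := by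
      refine Finset.disjoint_left.2 fun τ hτ hτ' => ?_
      rw [SHead, Finset.mem_filter] at hτ hτ'
      rw [hτ.2] at hτ'
      simp at hτ'
    rw [Dev_succ_compl,
      indep_det hP h0 h1 hSheadDisj (detBy_Bev false n) (detBy_Bev true n),
      hBev false, hBev true,
      ← ENNReal.ofReal_mul (by
        have hnn : 0 ≤ xseq β₀ β₁ n := xseq_nonneg h0 h1 n
        have h2 : (0:ℝ) ≤ β₀ * xseq β₀ β₁ n := mul_nonneg (le_of_lt h0.1) hnn
        have h3 := h0.2
        simp only [hβb, if_false, Bool.false_eq_true]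
        nlinarith)]
    simp [xseq, hβb]

def sβ (β₀ β₁ : ℝ) : ℝ := (β₀ + β₁ - 1) / (β₀ * β₁)

section Analysis2
open Filter
variable (h0 : β₀ ∈ Set.Ioo (0:ℝ) 1) (h1 : β₁ ∈ Set.Ioo (0:ℝ) 1) (hsum : 1 < β₀ + β₁)
include h0 h1

lemma qβ_eq : 1 - sβ β₀ β₁ = (1 - β₀) * (1 - β₁) / (β₀ * β₁) := by
  have a0 := h0.1; have b0 := h0.2; have a1 := h1.1; have b1 := h1.2
  rw [sβ]
  field_simp
  ring

include hsum

lemma sβ_pos : 0 < sβ β₀ β₁ := by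
  have a0 := h0.1; have b0 := h0.2; have a1 := h1.1; have b1 := h1.2
  exact div_pos (by linarith) (by nlinarith)

lemma qβ_nonneg : 0 ≤ 1 - sβ β₀ β₁ := by
  have a0 := h0.1; have b0 := h0.2; have a1 := h1.1; have b1 := h1.2
  rw [qβ_eq h0 h1]
  apply div_nonneg <;> nlinarith

lemma qβ_lt_one : 1 - sβ β₀ β₁ < 1 := by
  have := sβ_pos h0 h1 hsum; linarith

lemma xseq_le_qβ : ∀ n, xseq β₀ β₁ n ≤ 1 - sβ β₀ β₁ := by
  have a0 := h0.1; have b0 := h0.2; have a1 := h1.1; have b1 := h1.2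
  have hq := qβ_nonneg h0 h1 hsum
  have hqe := qβ_eq h0 h1
  intro n
  induction n with
  | zero => simpa [xseq] using hq
  | succ n ih =>
    have hnn := xseq_nonneg h0 h1 n
    set x := xseq β₀ β₁ n
    set q := 1 - sβ β₀ β₁
    have hfq : (1 - β₀ + β₀ * q) * (1 - β₁ + β₁ * q) = q := by
      rw [hqe]; field_simp; ring
    have step : (1 - β₀ + β₀ * x) * (1 - β₁ + β₁ * x) ≤ (1 - β₀ + β₀ * q) * (1 - β₁ + β₁ * q) := by
      apply mul_le_mul (by nlinarith) (by nlinarith) (by nlinarith) (by nlinarith)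
    calc xseq β₀ β₁ (n+1) = (1 - β₀ + β₀ * x) * (1 - β₁ + β₁ * x) := rfl
    _ ≤ (1 - β₀ + β₀ * q) * (1 - β₁ + β₁ * q) := step
    _ = q := hfq

lemma xseq_mono : Monotone (xseq β₀ β₁) := by
  have a0 := h0.1; have b0 := h0.2; have a1 := h1.1; have b1 := h1.2
  apply monotone_nat_of_le_succ
  intro n
  induction n with
  | zero =>
    have : (0:ℝ) ≤ xseq β₀ β₁ 1 := xseq_nonneg h0 h1 1
    simpa [xseq] using this
  | succ n ih =>
    have hnn := xseq_nonneg h0 h1 n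
    have hnn' := xseq_nonneg h0 h1 (n+1)
    show (1 - β₀ + β₀ * xseq β₀ β₁ n) * (1 - β₁ + β₁ * xseq β₀ β₁ n)
      ≤ (1 - β₀ + β₀ * xseq β₀ β₁ (n+1)) * (1 - β₁ + β₁ * xseq β₀ β₁ (n+1))
    apply mul_le_mul (by nlinarith) (by nlinarith) (by nlinarith) (by nlinarith)

lemma xseq_tendsto : Tendsto (xseq β₀ β₁) atTop (nhds (1 - sβ β₀ β₁)) := by
  have a0 := h0.1; have b0 := h0.2; have a1 := h1.1; have b1 := h1.2
  have hbdd : BddAbove (Set.range (xseq β₀ β₁)) :=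
    ⟨1 - sβ β₀ β₁, by rintro _ ⟨n, rfl⟩; exact xseq_le_qβ h0 h1 hsum n⟩
  set L := ⨆ n, xseq β₀ β₁ n with hL
  have htend : Tendsto (xseq β₀ β₁) atTop (nhds L) :=
    tendsto_atTop_ciSup (xseq_mono h0 h1 hsum) hbdd
  have hLle : L ≤ 1 - sβ β₀ β₁ := ciSup_le (xseq_le_qβ h0 h1 hsum)
  have hL0 : 0 ≤ L := le_trans (xseq_nonneg h0 h1 0) (le_ciSup hbdd 0)
  have hfix : (1 - β₀ + β₀ * L) * (1 - β₁ + β₁ * L) = L := by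
    have h1' : Tendsto (fun n => xseq β₀ β₁ (n+1)) atTop (nhds L) :=
      htend.comp (tendsto_add_atTop_nat 1)
    have h2' : Tendsto (fun n => (1 - β₀ + β₀ * xseq β₀ β₁ n) * (1 - β₁ + β₁ * xseq β₀ β₁ n))
        atTop (nhds ((1 - β₀ + β₀ * L) * (1 - β₁ + β₁ * L))) := by
      apply Tendsto.mul
      · exact (tendsto_const_nhds.add (tendsto_const_nhds.mul htend))
      · exact (tendsto_const_nhds.add (tendsto_const_nhds.mul htend))
    exact tendsto_nhds_unique h2' h1'
  have hexp : (1 - β₀ + β₀ * L) * (1 - β₁ + β₁ * L) - L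
      = β₀ * β₁ * (L - 1) * (L - (1 - sβ β₀ β₁)) := by
    rw [qβ_eq h0 h1]
    field_simp
    ring
  have hzero : β₀ * β₁ * (L - 1) * (L - (1 - sβ β₀ β₁)) = 0 := by rw [← hexp, hfix]; ring
  have hL1 : L - 1 ≠ 0 := by
    have := qβ_lt_one h0 h1 hsum; intro h; nlinarith
  have : L - (1 - sβ β₀ β₁) = 0 := by
    rcases mul_eq_zero.1 hzero with h | h
    · rcases mul_eq_zero.1 h with h' | h'
      · nlinarith [mul_eq_zero.1 h']
      · exact absurd h' hL1
    · exact h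
  have : L = 1 - sβ β₀ β₁ := by linarith
  rwa [this] at htend

end Analysis2

def Einf : Set (Coord → Bool) := ⋂ n, Dev n

lemma measurableSet_Einf : MeasurableSet Einf :=
  MeasurableSet.iInter fun n => (detBy_Dev n).measurableSet

lemma measure_Einf (h0 : β₀ ∈ Set.Ioo (0:ℝ) 1) (h1 : β₁ ∈ Set.Ioo (0:ℝ) 1)
    (hsum : 1 < β₀ + β₁) (hP : IsGW β₀ β₁ P) : P Einf = ENNReal.ofReal (sβ β₀ β₁) := by
  haveI := hP.1
  have hcompl : Einfᶜ = ⋃ n, (Dev n)ᶜ := by simp [Einf, Set.compl_iInter]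
  have hmono : Monotone (fun n => (Dev n)ᶜ) :=
    fun a b hab => Set.compl_subset_compl.2 (Dev_antitone hab)
  have h2 : P Einfᶜ = ⨆ n, P (Dev n)ᶜ := by
    rw [hcompl, hmono.directed_le.measure_iUnion]
  have h3 : ∀ n, P (Dev n)ᶜ = ENNReal.ofReal (xseq β₀ β₁ n) :=
    fun n => measure_Dev_compl h0 h1 n P hP
  have htend : Filter.Tendsto (fun n => P (Dev n)ᶜ) Filter.atTop
      (nhds (ENNReal.ofReal (1 - sβ β₀ β₁))) := by
    simp_rw [h3]
    exact (ENNReal.continuous_ofReal.tendsto _).comp (xseq_tendsto h0 h1 hsum)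
  have hmono' : Monotone fun n => P (Dev n)ᶜ := fun a b hab => measure_mono (hmono hab)
  have h4 : P Einfᶜ = ENNReal.ofReal (1 - sβ β₀ β₁) := by
    rw [h2]
    exact tendsto_nhds_unique (tendsto_atTop_iSup hmono') htend
  have h5 : P Einf = 1 - ENNReal.ofReal (1 - sβ β₀ β₁) := by
    have := measure_compl measurableSet_Einf.compl (measure_ne_top P _)
    rw [compl_compl, measure_univ, h4] at this
    exact this
  rw [h5]
  refine ENNReal.sub_eq_of_eq_add (by simp) ?_
  rw [← ENNReal.ofReal_one, ← ENNReal.ofReal_add (le_of_lt (sβ_pos h0 h1 hsum)) (qβ_nonneg h0 h1 hsum)]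
  norm_num

lemma tail_indep (hprob : IsProbabilityMeasure P) (A B : ℕ → Set (Coord → Bool))
    (hA : Antitone A) (hB : Antitone B)
    (mA : ∀ n, MeasurableSet (A n)) (mB : ∀ n, MeasurableSet (B n))
    (h : ∀ n, P (A n ∩ B n) = P (A n) * P (B n)) :
    P ((⋂ n, A n) ∩ ⋂ n, B n) = P (⋂ n, A n) * P (⋂ n, B n) := by
  have hAB : (⋂ n, A n) ∩ (⋂ n, B n) = ⋂ n, (A n ∩ B n) := by
    ext ω; simp [Set.mem_iInter, forall_and]
  have t1 : Filter.Tendsto (fun n => P (A n ∩ B n)) Filter.atTop (nhds (P (⋂ n, A n ∩ B n))) :=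
    tendsto_measure_iInter_atTop (fun n => ((mA n).inter (mB n)).nullMeasurableSet)
      (fun a b hab => Set.inter_subset_inter (hA hab) (hB hab)) ⟨0, measure_ne_top P _⟩
  have t2 : Filter.Tendsto (fun n => P (A n)) Filter.atTop (nhds (P (⋂ n, A n))) :=
    tendsto_measure_iInter_atTop (fun n => (mA n).nullMeasurableSet) hA ⟨0, measure_ne_top P _⟩
  have t3 : Filter.Tendsto (fun n => P (B n)) Filter.atTop (nhds (P (⋂ n, B n))) :=
    tendsto_measure_iInter_atTop (fun n => (mB n).nullMeasurableSet) hB ⟨0, measure_ne_top P _⟩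
  have t4 : Filter.Tendsto (fun n => P (A n) * P (B n)) Filter.atTop
      (nhds (P (⋂ n, A n) * P (⋂ n, B n))) :=
    ENNReal.Tendsto.mul t2 (Or.inr (measure_ne_top P _)) t3 (Or.inr (measure_ne_top P _))
  rw [hAB]
  exact tendsto_nhds_unique (by simpa only [h] using t1 : _) t4

def prefC (σ : List Bool) : Finset Coord := (σ.inits.toFinset).subtype (· ≠ [])

lemma mem_prefC {σ : List Bool} {τ : Coord} : τ ∈ prefC σ ↔ τ.val <+: σ := by
  simp [prefC, List.mem_inits]

def treeEv (σ : List Bool) : Set (Coord → Bool) := {ω | σ ∈ gwTree ω}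

lemma detBy_cylE (S : Finset Coord) (f : Coord → Bool) : DetBy ↑S (cylE S f) :=
  fun ω ω' hag h σ hσ => (hag σ hσ) ▸ h σ hσ

lemma treeEv_eq_cyl (σ : List Bool) : treeEv σ = cylE (prefC σ) (fun _ => true) := by
  ext ω
  simp only [treeEv, gwTree, cylE, Set.mem_setOf_eq]
  constructor
  · intro h τ hτ; exact h τ (mem_prefC.1 hτ)
  · intro h τ hτ; exact h τ (mem_prefC.2 hτ)

lemma detBy_treeEv (σ : List Bool) : DetBy ↑(prefC σ) (treeEv σ) := by
  rw [treeEv_eq_cyl]; exact detBy_cylE _ _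

lemma meas_treeEv (hP : IsGW β₀ β₁ P) (σ : List Bool) :
    P (treeEv σ) = ENNReal.ofReal (∏ τ ∈ prefC σ, gwP' β₀ β₁ τ true) := by
  rw [treeEv_eq_cyl, hP.2]

lemma gwP'_true_pos (h0 : β₀ ∈ Set.Ioo (0:ℝ) 1) (h1 : β₁ ∈ Set.Ioo (0:ℝ) 1) (τ : Coord) :
    0 < gwP' β₀ β₁ τ true := by
  simp only [gwP', if_true]
  split
  · exact h0.1
  · exact h1.1

lemma tree_infinite_iff (ω : Coord → Bool) : (gwTree ω).Infinite ↔ ∀ n, ω ∈ Dev n := by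
  constructor
  · intro hinf n
    have hex : ∃ l ∈ gwTree ω, n ≤ l.length := by
      by_contra h
      push_neg at h
      exact hinf (((listsLE n).finite_toSet).subset
        (fun l hl => mem_listsLE.2 (le_of_lt (h l hl))))
    obtain ⟨l, hl, hn⟩ := hex
    exact ⟨l.take n, by rw [List.length_take]; omega, gwTree_mono (List.take_prefix n l) hl⟩
  · intro h
    have hch : ∀ n : ℕ, ∃ l : List Bool, l.length = n ∧ l ∈ gwTree ω := h
    choose g hg1 hg2 using hch
    exact Set.infinite_of_injective_forall_mem
      (f := g) (fun m n hmn => by rw [← hg1 m, ← hg1 n, hmn]) hg2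

lemma prune_iff (σ : List Bool) (ω : Coord → Bool) :
    σ ∈ gwPrune ω ↔ σ ∈ gwTree ω ∧ shiftω σ ω ∈ Einf := by
  unfold gwPrune
  rw [Set.mem_setOf_eq]
  refine and_congr_right fun hσ => ?_
  have himg : {τ | σ <+: τ ∧ τ ∈ gwTree ω} = (σ ++ ·) '' gwTree (shiftω σ ω) := by
    ext τ
    simp only [Set.mem_setOf_eq, Set.mem_image]
    constructor
    · rintro ⟨⟨t, rfl⟩, htree⟩
      exact ⟨t, (mem_gwTree_append hσ).1 htree, rfl⟩
    · rintro ⟨t, ht, rfl⟩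
      exact ⟨List.prefix_append σ t, (mem_gwTree_append hσ).2 ht⟩
  rw [himg, Set.infinite_image_iff
    (Function.Injective.injOn (fun a b h => List.append_cancel_left h))]
  rw [tree_infinite_iff]
  simp [Einf, Set.mem_iInter]

lemma shiftω_shiftω (s t : List Bool) (ω : Coord → Bool) :
    shiftω t (shiftω s ω) = shiftω (s ++ t) ω := by
  funext τ
  simp only [shiftω]
  congr 1
  exact Subtype.ext (List.append_assoc s t τ.val).symm

def extPC (σ : List Bool) (m : ℕ) : Finset Coord :=
  (SLE (σ.length + m)).filter (fun τ => σ <+: τ.val ∧ σ.length < τ.val.length)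

def extIC (σ : List Bool) (m : ℕ) : Finset Coord :=
  (SLE (σ.length + m)).filter (fun τ => σ <+: τ.val)

lemma mem_extPC {σ : List Bool} {m : ℕ} {τ : Coord} :
    τ ∈ extPC σ m ↔ τ.val.length ≤ σ.length + m ∧ σ <+: τ.val ∧ σ.length < τ.val.length := by
  simp [extPC, mem_SLE]

lemma mem_extIC {σ : List Bool} {m : ℕ} {τ : Coord} :
    τ ∈ extIC σ m ↔ τ.val.length ≤ σ.length + m ∧ σ <+: τ.val := by
  simp [extIC, mem_SLE]

lemma detBy_shift_Dev (σ : List Bool) (m : ℕ) :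
    DetBy ↑(extPC σ m) (shiftω σ ⁻¹' Dev m) := by
  refine (detBy_shiftω_pre (detBy_Dev m)).mono ?_
  rintro τ ⟨ρ, rfl, hρ⟩
  rw [Finset.mem_coe, mem_extPC]
  have hlen : (appC σ ρ).val.length = σ.length + ρ.val.length := by
    show (σ ++ ρ.val).length = _; simp
  have hρpos : 0 < ρ.val.length := List.length_pos_iff.2 ρ.prop
  exact ⟨by omega, List.prefix_append σ ρ.val, by omega⟩

lemma detBy_shift_Dev' (σ : List Bool) (m : ℕ) {k : ℕ} (hk : σ.length + m ≤ k) (ρ₀ : List Bool)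
    (hρ₀ : ρ₀ <+: σ) :
    DetBy ↑(extIC ρ₀ (k - ρ₀.length)) (shiftω σ ⁻¹' Dev m) := by
  refine (detBy_shiftω_pre (detBy_Dev m)).mono ?_
  rintro τ ⟨ρ, rfl, hρ⟩
  rw [Finset.mem_coe, mem_extIC]
  have hlen : (appC σ ρ).val.length = σ.length + ρ.val.length := by
    show (σ ++ ρ.val).length = _; simp
  have hρ₀len : ρ₀.length ≤ σ.length := hρ₀.length_le
  constructor
  · omega
  · exact hρ₀.trans (List.prefix_append σ ρ.val)

lemma disj_prefC_extPC (σ : List Bool) (m : ℕ) : Disjoint (prefC σ) (extPC σ m) := by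
  refine Finset.disjoint_left.2 fun τ hτ hτ' => ?_
  rw [mem_prefC] at hτ
  rw [mem_extPC] at hτ'
  have := hτ.length_le
  omega

lemma disj_extIC (σ : List Bool) (m m' : ℕ) :
    Disjoint (extIC (σ ++ [false]) m) (extIC (σ ++ [true]) m') := by
  refine Finset.disjoint_left.2 fun τ hτ hτ' => ?_
  rw [mem_extIC] at hτ hτ'
  have h1 := hτ.2
  have h2 := hτ'.2
  have : (σ ++ [false]) <+: (σ ++ [true]) :=
    List.prefix_of_prefix_length_le h1 h2 (by simp)
  have heq : (σ ++ [false]) = (σ ++ [true]) := this.eq_of_length (by simp)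
  have := List.append_cancel_left heq
  simp at this

section Final
variable (h0 : β₀ ∈ Set.Ioo (0:ℝ) 1) (h1 : β₁ ∈ Set.Ioo (0:ℝ) 1) (hsum : 1 < β₀ + β₁)
include h0 h1 hsum

lemma meas_shift_Einf (hP : IsGW β₀ β₁ P) (σ : List Bool) :
    P (shiftω σ ⁻¹' Einf) = ENNReal.ofReal (sβ β₀ β₁) := by
  rw [← Measure.map_apply (measurable_shiftω σ) measurableSet_Einf]
  exact measure_Einf h0 h1 hsum (isGW_map_shiftω hP σ)

lemma meas_prune (hP : IsGW β₀ β₁ P) (σ : List Bool) :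
    P {ω | σ ∈ gwPrune ω}
      = ENNReal.ofReal (∏ τ ∈ prefC σ, gwP' β₀ β₁ τ true) * ENNReal.ofReal (sβ β₀ β₁) := by
  have hset : {ω : Coord → Bool | σ ∈ gwPrune ω} = treeEv σ ∩ shiftω σ ⁻¹' Einf := by
    ext ω; exact prune_iff σ ω
  have hpre : shiftω σ ⁻¹' Einf = ⋂ n, shiftω σ ⁻¹' Dev n := by
    rw [Einf, Set.preimage_iInter]
  have htail := tail_indep hP.1 (fun _ => treeEv σ) (fun n => shiftω σ ⁻¹' Dev n)
    (fun _ _ _ => le_refl _) (fun a b hab => Set.preimage_mono (Dev_antitone hab))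
    (fun _ => (detBy_treeEv σ).measurableSet) (fun n => (measurable_shiftω σ) (detBy_Dev n).measurableSet)
    (fun n => indep_det hP h0 h1 (disj_prefC_extPC σ n) (detBy_treeEv σ) (detBy_shift_Dev σ n))
  rw [Set.iInter_const] at htail
  rw [hset, hpre, htail, ← hpre, meas_treeEv hP, meas_shift_Einf h0 h1 hsum hP]

omit h0 h1 hsum in
lemma tree_append_single (σ : List Bool) (b : Bool) (ω : Coord → Bool) :
    σ ++ [b] ∈ gwTree ω ↔ σ ∈ gwTree ω ∧ ω (appC σ (coordOf b)) = true := by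
  constructor
  · intro h
    exact ⟨gwTree_mono (List.prefix_append σ [b]) h, h (appC σ (coordOf b)) (List.prefix_refl _)⟩
  · rintro ⟨h1, h2⟩ π hπ
    rcases le_or_gt π.val.length σ.length with hle | hlt
    · exact h1 π (List.prefix_of_prefix_length_le hπ (List.prefix_append σ [b]) hle)
    · have hl2 : π.val.length = σ.length + 1 := le_antisymm (by simpa using hπ.length_le) hlt
      have heq : π = appC σ (coordOf b) := Subtype.ext (hπ.eq_of_length (by simp [hl2]))
      rw [heq]; exact h2

end Final

def chE (σ : List Bool) (b : Bool) (n : ℕ) : Set (Coord → Bool) :=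
  {ω | ω (appC σ (coordOf b)) = true} ∩ shiftω (σ ++ [b]) ⁻¹' Dev n

lemma chE_subset (σ : List Bool) (b : Bool) (n : ℕ) :
    chE σ b n ⊆ shiftω σ ⁻¹' Dev (n+1) := by
  rintro ω ⟨h1, h2⟩
  obtain ⟨ρ, hρlen, hρ⟩ := h2
  refine ⟨b :: ρ, by simp [hρlen], ?_⟩
  rw [cons_mem_gwTree]
  exact ⟨h1, by rw [shiftω_shiftω]; exact hρ⟩

lemma chE_antitone (σ : List Bool) (b : Bool) : Antitone (chE σ b) :=
  fun a c hac => Set.inter_subset_inter (le_refl _) (Set.preimage_mono (Dev_antitone hac))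

lemma appC_mem_extIC (σ : List Bool) (b : Bool) (n : ℕ) :
    appC σ (coordOf b) ∈ extIC (σ ++ [b]) n := by
  rw [mem_extIC]
  refine ⟨?_, List.prefix_refl _⟩
  simp only [appC, coordOf, List.length_append, List.length_cons, List.length_nil]
  omega

lemma detBy_chE (σ : List Bool) (b : Bool) (n : ℕ) :
    DetBy ↑(extIC (σ ++ [b]) n) (chE σ b n) := by
  refine DetBy.inter ?_ ?_
  · exact (detBy_coord _ true).mono (by
      intro τ hτ
      rw [Set.mem_singleton_iff] at hτ
      rw [hτ]
      exact Finset.mem_coe.2 (appC_mem_extIC σ b n))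
  · refine (detBy_shiftω_pre (detBy_Dev n)).mono ?_
    rintro τ ⟨ρ, rfl, hρ⟩
    rw [Finset.mem_coe, mem_extIC]
    constructor
    · show ((σ ++ [b]) ++ ρ.val).length ≤ (σ ++ [b]).length + n
      simp only [List.length_append]
      omega
    · exact List.prefix_append _ _
  
lemma extIC_subset_extPC (σ : List Bool) (b : Bool) (n : ℕ) :
    extIC (σ ++ [b]) n ⊆ extPC σ (n+1) := by
  intro τ hτ
  rw [mem_extIC] at hτ
  rw [mem_extPC]
  obtain ⟨hlen, hpre⟩ := hτ
  have h2 : σ <+: τ.val := (List.prefix_append σ [b]).trans hpre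
  have h3 := hpre.length_le
  simp only [List.length_append, List.length_cons, List.length_nil] at hlen h3
  exact ⟨by omega, h2, by omega⟩

def childBoth (σ : List Bool) : Set (Coord → Bool) :=
  {ω | σ ++ [false] ∈ gwPrune ω ∧ σ ++ [true] ∈ gwPrune ω}

lemma childBoth_eq (σ : List Bool) :
    childBoth σ = treeEv σ ∩ ((⋂ n, chE σ false n) ∩ (⋂ n, chE σ true n)) := by
  ext ω
  constructor
  · rintro ⟨hpf, hpt⟩
    rw [prune_iff, tree_append_single] at hpf hpt
    refine ⟨hpf.1.1, Set.mem_inter (Set.mem_iInter.2 fun n => ?_) (Set.mem_iInter.2 fun n => ?_)⟩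
    · exact ⟨hpf.1.2, Set.mem_iInter.1 hpf.2 n⟩
    · exact ⟨hpt.1.2, Set.mem_iInter.1 hpt.2 n⟩
  · rintro ⟨ht, hf, htr⟩
    have hf' : ∀ n, ω ∈ chE σ false n := Set.mem_iInter.1 hf
    have ht' : ∀ n, ω ∈ chE σ true n := Set.mem_iInter.1 htr
    constructor
    · rw [prune_iff, tree_append_single]
      exact ⟨⟨ht, (hf' 0).1⟩, Set.mem_iInter.2 fun n => (hf' n).2⟩
    · rw [prune_iff, tree_append_single]
      exact ⟨⟨ht, (ht' 0).1⟩, Set.mem_iInter.2 fun n => (ht' n).2⟩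

section Final2
variable (h0 : β₀ ∈ Set.Ioo (0:ℝ) 1) (h1 : β₁ ∈ Set.Ioo (0:ℝ) 1) (hsum : 1 < β₀ + β₁)
include h0 h1 hsum

lemma meas_chE_inf (hP : IsGW β₀ β₁ P) (σ : List Bool) (b : Bool) :
    P (⋂ n, chE σ b n)
      = ENNReal.ofReal (if b then β₁ else β₀) * ENNReal.ofReal (sβ β₀ β₁) := by
  have hd : ∀ n, Disjoint ({appC σ (coordOf b)} : Finset Coord) (extPC (σ ++ [b]) n) := by
    intro n
    refine Finset.disjoint_left.2 fun τ hτ hτ' => ?_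
    rw [Finset.mem_singleton] at hτ
    rw [mem_extPC] at hτ'
    have h2 := hτ'.2.2
    rw [hτ] at h2
    have : (appC σ (coordOf b)).val.length = (σ ++ [b]).length := rfl
    omega
  have htail := tail_indep hP.1 (fun _ => {ω : Coord → Bool | ω (appC σ (coordOf b)) = true})
    (fun n => shiftω (σ ++ [b]) ⁻¹' Dev n)
    (fun _ _ _ => le_refl _) (fun a c hac => Set.preimage_mono (Dev_antitone hac))
    (fun _ => (detBy_coord' _ true).measurableSet)
    (fun n => (measurable_shiftω _) (detBy_Dev n).measurableSet)
    (fun n => indep_det hP h0 h1 (hd n)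
      (detBy_coord' _ true) (detBy_shift_Dev (σ ++ [b]) n))
  rw [Set.iInter_const] at htail
  have hsplit : (⋂ n, chE σ b n)
      = {ω : Coord → Bool | ω (appC σ (coordOf b)) = true} ∩ ⋂ n, shiftω (σ ++ [b]) ⁻¹' Dev n := by
    ext ω; simp [chE, Set.mem_iInter, forall_and]
  have hpre : (⋂ n, shiftω (σ ++ [b]) ⁻¹' Dev n) = shiftω (σ ++ [b]) ⁻¹' Einf := by
    rw [Einf, Set.preimage_iInter]
  rw [hsplit, htail, hpre, meas_shift_Einf h0 h1 hsum hP, meas_coord hP]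
  congr 2
  rw [gwP'_appC, gwP'_coordOf_true]

lemma meas_childBoth (hP : IsGW β₀ β₁ P) (σ : List Bool) :
    P (childBoth σ) = ENNReal.ofReal (∏ τ ∈ prefC σ, gwP' β₀ β₁ τ true) *
      ((ENNReal.ofReal β₀ * ENNReal.ofReal (sβ β₀ β₁)) *
        (ENNReal.ofReal β₁ * ENNReal.ofReal (sβ β₀ β₁))) := by
  have detB : ∀ n, DetBy ↑(extPC σ (n+1)) (chE σ false n ∩ chE σ true n) := by
    intro n
    exact DetBy.inter
      ((detBy_chE σ false n).mono (Finset.coe_subset.2 (extIC_subset_extPC σ false n)))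
      ((detBy_chE σ true n).mono (Finset.coe_subset.2 (extIC_subset_extPC σ true n)))
  have htail := tail_indep hP.1 (fun _ => treeEv σ)
    (fun n => chE σ false n ∩ chE σ true n)
    (fun _ _ _ => le_refl _)
    (fun a c hac => Set.inter_subset_inter (chE_antitone σ false hac) (chE_antitone σ true hac))
    (fun _ => (detBy_treeEv σ).measurableSet)
    (fun n => (detB n).measurableSet)
    (fun n => indep_det hP h0 h1 (disj_prefC_extPC σ (n+1)) (detBy_treeEv σ) (detB n))
  rw [Set.iInter_const] at htail
  have hsplit : (⋂ n, chE σ false n ∩ chE σ true n)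
      = (⋂ n, chE σ false n) ∩ (⋂ n, chE σ true n) := by
    ext ω; simp [Set.mem_iInter, forall_and]
  have htail2 := tail_indep hP.1 (chE σ false) (chE σ true)
    (chE_antitone σ false) (chE_antitone σ true)
    (fun n => (detBy_chE σ false n).measurableSet)
    (fun n => (detBy_chE σ true n).measurableSet)
    (fun n => indep_det hP h0 h1 (disj_extIC σ n n) (detBy_chE σ false n) (detBy_chE σ true n))
  rw [childBoth_eq, ← hsplit, htail, hsplit, htail2,
    meas_chE_inf h0 h1 hsum hP σ false, meas_chE_inf h0 h1 hsum hP σ true,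
    meas_treeEv hP]
  simp

end Final2

lemma childBoth_subset (σ : List Bool) : childBoth σ ⊆ {ω | σ ∈ gwPrune ω} := by
  rintro ω ⟨hpf, _⟩
  rw [prune_iff, tree_append_single] at hpf
  rw [Set.mem_setOf_eq, prune_iff]
  refine ⟨hpf.1.1, Set.mem_iInter.2 fun n => ?_⟩
  match n with
  | 0 => rw [Dev_zero]; trivial
  | n+1 =>
    have : ω ∈ chE σ false n := ⟨hpf.1.2, Set.mem_iInter.1 hpf.2 n⟩
    exact chE_subset σ false n this

theorem stmt8' (h0 : β₀ ∈ Set.Ioo (0 : ℝ) 1) (h1 : β₁ ∈ Set.Ioo (0 : ℝ) 1)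
    (hsum : 1 < β₀ + β₁) (hP : IsGW β₀ β₁ P) (σ : List Bool) :
    0 < P {ω | σ ∈ gwPrune ω} ∧
    ProbabilityTheory.cond P {ω | σ ∈ gwPrune ω}
        {ω | σ ++ [false] ∈ gwPrune ω ∧ σ ++ [true] ∈ gwPrune ω} =
      ENNReal.ofReal (β₀ + β₁ - 1) := by
  set t := ∏ τ ∈ prefC σ, gwP' β₀ β₁ τ true with ht
  have htpos : 0 < t := Finset.prod_pos fun τ _ => gwP'_true_pos h0 h1 τ
  have hspos : 0 < sβ β₀ β₁ := sβ_pos h0 h1 hsum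
  have hmeas : P {ω | σ ∈ gwPrune ω} = ENNReal.ofReal (t * sβ β₀ β₁) := by
    rw [meas_prune h0 h1 hsum hP σ, ← ENNReal.ofReal_mul htpos.le]
  have hpos : 0 < P {ω | σ ∈ gwPrune ω} := by
    rw [hmeas]; exact ENNReal.ofReal_pos.2 (mul_pos htpos hspos)
  refine ⟨hpos, ?_⟩
  have hms : MeasurableSet {ω : Coord → Bool | σ ∈ gwPrune ω} := by
    have : {ω : Coord → Bool | σ ∈ gwPrune ω} = treeEv σ ∩ shiftω σ ⁻¹' Einf := by
      ext ω; exact prune_iff σ ω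
    rw [this]
    exact (detBy_treeEv σ).measurableSet.inter ((measurable_shiftω σ) measurableSet_Einf)
  rw [ProbabilityTheory.cond_apply hms P]
  have hint : {ω : Coord → Bool | σ ∈ gwPrune ω} ∩
      {ω | σ ++ [false] ∈ gwPrune ω ∧ σ ++ [true] ∈ gwPrune ω} = childBoth σ :=
    Set.inter_eq_right.2 (childBoth_subset σ)
  rw [hint, meas_childBoth h0 h1 hsum hP σ]
  have harith : ENNReal.ofReal t *
      ((ENNReal.ofReal β₀ * ENNReal.ofReal (sβ β₀ β₁)) *
        (ENNReal.ofReal β₁ * ENNReal.ofReal (sβ β₀ β₁)))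
      = ENNReal.ofReal (t * sβ β₀ β₁) * ENNReal.ofReal (β₀ + β₁ - 1) := by
    rw [← ENNReal.ofReal_mul h0.1.le, ← ENNReal.ofReal_mul h1.1.le,
      ← ENNReal.ofReal_mul (mul_nonneg h0.1.le hspos.le),
      ← ENNReal.ofReal_mul htpos.le, ← ENNReal.ofReal_mul (mul_nonneg htpos.le hspos.le)]
    congr 1
    have hkey : β₀ * β₁ * sβ β₀ β₁ = β₀ + β₁ - 1 := by
      rw [sβ]
      exact mul_div_cancel₀ _ (mul_pos h0.1 h1.1).ne'
    rw [← hkey]; ring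
  rw [hmeas, harith, ← mul_assoc,
    ENNReal.inv_mul_cancel (ENNReal.ofReal_pos.2 (mul_pos htpos hspos)).ne'
      ENNReal.ofReal_ne_top, one_mul]

lemma gwP'_eq_gwP : @gwP' = @gwP := rfl

/-- For `β₀, β₁ ∈ (0,1)` with `β₀ + β₁ > 1` and every finite binary string
`σ`: the event `σ ∈ Prune(ω)` has positive `P_{β₀,β₁}`-measure, and the conditional
probability, given `σ ∈ Prune(ω)`, that both children `σ0` and `σ1` are in `Prune(ω)` is
`β₀ + β₁ - 1`. -/
theorem stmt8 (β₀ β₁ : ℝ) (h0 : β₀ ∈ Set.Ioo (0 : ℝ) 1) (h1 : β₁ ∈ Set.Ioo (0 : ℝ) 1)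
    (hsum : 1 < β₀ + β₁)
    (P : Measure ({σ : List Bool // σ ≠ []} → Bool)) (hP : IsGWMeasure β₀ β₁ P)
    (σ : List Bool) :
    0 < P {ω | σ ∈ gwPrune ω} ∧
    ProbabilityTheory.cond P {ω | σ ∈ gwPrune ω}
        {ω | σ ++ [false] ∈ gwPrune ω ∧ σ ++ [true] ∈ gwPrune ω} =
      ENNReal.ofReal (β₀ + β₁ - 1) := by
  have hP' : IsGW β₀ β₁ P := ⟨hP.1, fun S f => by rw [gwP'_eq_gwP]; exact hP.2 S f⟩
  exact stmt8' h0 h1 hsum hP' σ
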